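/- Let μ be a locally finite positive Borel measure on ℝ, S ∈ D a dyadic interval, and Λ a connected subset of D[S]∖{S} (connected in the tree order: if I ⊆ K ⊆ J with I, J ∈ Λ and K dyadic then K ∈ Λ). Then the Haar projection P_Λ f = ∑_{I ∈ Λ} Δ_I^μ f satisfies the pointwise bound |P_Λ f(x)| ≤ 2 M_μ(1_S f)(x), where M_μ is the dyadic maximal operator with respect to μ. -/

import Mathlib

open MeasureTheory Set
open scoped ENNReal NNReal

/-- The dyadic interval `[k·2ⁿ, (k+1)·2ⁿ)`. -/
def dyadicInterval (n k : ℤ) : Set ℝ :=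
  Set.Ico ((k : ℝ) * 2 ^ n) (((k : ℝ) + 1) * 2 ^ n)

/-- The dyadic maximal function with respect to the measure `μ`. -/
noncomputable def dyadicMaximal (μ : Measure ℝ) (f : ℝ → ℝ≥0∞) (x : ℝ) : ℝ≥0∞ :=
  ⨆ (n : ℤ) (k : ℤ) (_ : x ∈ dyadicInterval n k),
    (μ (dyadicInterval n k))⁻¹ * ∫⁻ y in dyadicInterval n k, f y ∂μ

/-- The `μ`-average of `f` over a set `I`. -/
noncomputable def dyadicAvg (μ : Measure ℝ) (f : ℝ → ℝ) (I : Set ℝ) : ℝ :=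
  (∫ y in I, f y ∂μ) / (μ I).toReal

/-- The weighted Haar (martingale difference) projection on the dyadic interval
indexed by `(n,k)`:
`Δ_I^μ f = (E_{I_-}^μ f)·1_{I_-} + (E_{I_+}^μ f)·1_{I_+} − (E_I^μ f)·1_I`. -/
noncomputable def haarDiff (μ : Measure ℝ) (f : ℝ → ℝ) (n k : ℤ) (x : ℝ) : ℝ :=
  (dyadicInterval (n - 1) (2 * k)).indicator
      (fun _ => dyadicAvg μ f (dyadicInterval (n - 1) (2 * k))) x
    + (dyadicInterval (n - 1) (2 * k + 1)).indicator
      (fun _ => dyadicAvg μ f (dyadicInterval (n - 1) (2 * k + 1))) x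
    - (dyadicInterval n k).indicator (fun _ => dyadicAvg μ f (dyadicInterval n k)) x

open scoped Topology

noncomputable def dyadicIdx (x : ℝ) (n : ℤ) : ℤ := ⌊x / (2:ℝ) ^ n⌋

lemma two_zpow_pos (n : ℤ) : (0:ℝ) < 2 ^ n := by positivity

lemma mem_dyadic_iff {n k : ℤ} {x : ℝ} :
    x ∈ dyadicInterval n k ↔ dyadicIdx x n = k := by
  have h : (0:ℝ) < 2 ^ n := two_zpow_pos n
  rw [dyadicInterval, Set.mem_Ico, dyadicIdx, Int.floor_eq_iff, le_div_iff₀ h, div_lt_iff₀ h]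

lemma mem_dk (x : ℝ) (n : ℤ) : x ∈ dyadicInterval n (dyadicIdx x n) :=
  mem_dyadic_iff.2 rfl

lemma dyadic_nested {n n' k k' : ℤ} (h : n ≤ n') {x : ℝ}
    (hx : x ∈ dyadicInterval n k) (hx' : x ∈ dyadicInterval n' k') :
    dyadicInterval n k ⊆ dyadicInterval n' k' := by
  set e : ℕ := (n' - n).toNat with he
  have hn' : n' = n + e := by omega
  have hpow : (2:ℝ) ^ n' = 2 ^ n * 2 ^ e := by
    rw [hn', zpow_add₀ (two_ne_zero), zpow_natCast]
  have hp := two_zpow_pos n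
  simp only [dyadicInterval, Set.mem_Ico] at hx hx'
  have h1 : k' * 2 ^ e ≤ k := by
    have h3 := lt_of_le_of_lt hx'.1 hx.2
    rw [hpow] at h3
    have h4 : ((k':ℝ) * 2 ^ e) * 2 ^ n < ((k:ℝ) + 1) * 2 ^ n := by linear_combination h3
    have h5 : (k':ℝ) * 2 ^ e < (k:ℝ) + 1 := lt_of_mul_lt_mul_right h4 hp.le
    have : (k' * 2 ^ e : ℤ) < k + 1 := by exact_mod_cast h5
    omega
  have h2 : k + 1 ≤ (k' + 1) * 2 ^ e := by
    have h3 := lt_of_le_of_lt hx.1 hx'.2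
    rw [hpow] at h3
    have h4 : ((k:ℝ)) * 2 ^ n < (((k':ℝ) + 1) * 2 ^ e) * 2 ^ n := by linear_combination h3
    have h5 : (k:ℝ) < ((k':ℝ) + 1) * 2 ^ e := lt_of_mul_lt_mul_right h4 hp.le
    have : (k : ℤ) < (k' + 1) * 2 ^ e := by exact_mod_cast h5
    omega
  intro y hy
  simp only [dyadicInterval, Set.mem_Ico] at hy ⊢
  have h1r : ((k':ℝ) * 2 ^ e) ≤ k := by exact_mod_cast h1
  have h2r : ((k:ℝ) + 1) ≤ (k' + 1) * 2 ^ e := by exact_mod_cast h2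
  constructor
  · rw [hpow]
    nlinarith [hy.1, mul_le_mul_of_nonneg_right h1r hp.le]
  · rw [hpow]
    nlinarith [hy.2, mul_le_mul_of_nonneg_right h2r hp.le]


lemma child_subset {n k j : ℤ} (hj : j = 2 * k ∨ j = 2 * k + 1) :
    dyadicInterval (n - 1) j ⊆ dyadicInterval n k := by
  have hc := two_zpow_pos (n - 1)
  have h2 : (2:ℝ) ^ n = 2 ^ (n - 1) * 2 := by
    rw [← zpow_add_one₀ (two_ne_zero : (2:ℝ) ≠ 0) (n - 1)]
    norm_num
  intro y hy
  simp only [dyadicInterval, Set.mem_Ico] at hy ⊢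
  rw [h2]
  rcases hj with hj | hj <;> subst hj <;> push_cast at hy ⊢ <;>
    constructor <;> nlinarith [hy.1, hy.2]

lemma haar_not_mem {μ : Measure ℝ} {f : ℝ → ℝ} {n k : ℤ} {x : ℝ}
    (hx : x ∉ dyadicInterval n k) : haarDiff μ f n k x = 0 := by
  have h1 : x ∉ dyadicInterval (n - 1) (2 * k) :=
    fun h => hx (child_subset (Or.inl rfl) h)
  have h2 : x ∉ dyadicInterval (n - 1) (2 * k + 1) :=
    fun h => hx (child_subset (Or.inr rfl) h)
  rw [haarDiff, Set.indicator_of_notMem h1, Set.indicator_of_notMem h2,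
    Set.indicator_of_notMem hx]
  ring

lemma dyadicIdx_child {n k : ℤ} {x : ℝ} (hx : x ∈ dyadicInterval n k) :
    dyadicIdx x (n - 1) = 2 * k ∨ dyadicIdx x (n - 1) = 2 * k + 1 := by
  set j := dyadicIdx x (n - 1) with hjdef
  have hxj : x ∈ dyadicInterval (n - 1) j := mem_dk x (n - 1)
  have hc := two_zpow_pos (n - 1)
  have h2 : (2:ℝ) ^ n = 2 ^ (n - 1) * 2 := by
    rw [← zpow_add_one₀ (two_ne_zero : (2:ℝ) ≠ 0) (n - 1)]
    norm_num
  simp only [dyadicInterval, Set.mem_Ico] at hx hxj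
  have hu : (j:ℝ) < 2 * k + 2 := by
    have h3 := lt_of_le_of_lt hxj.1 hx.2
    rw [h2] at h3
    have h4 : (j:ℝ) * 2 ^ (n-1) < (2 * (k:ℝ) + 2) * 2 ^ (n-1) := by linear_combination h3
    exact lt_of_mul_lt_mul_right h4 hc.le
  have hl : 2 * (k:ℝ) < (j:ℝ) + 1 := by
    have h3 := lt_of_le_of_lt hx.1 hxj.2
    rw [h2] at h3
    have h4 : (2 * (k:ℝ)) * 2 ^ (n-1) < ((j:ℝ) + 1) * 2 ^ (n-1) := by linear_combination h3
    exact lt_of_mul_lt_mul_right h4 hc.le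
  have hu' : j < 2 * k + 2 := by exact_mod_cast hu
  have hl' : 2 * k < j + 1 := by exact_mod_cast hl
  omega

lemma haar_mem {μ : Measure ℝ} {f : ℝ → ℝ} {n k : ℤ} {x : ℝ}
    (hx : x ∈ dyadicInterval n k) :
    haarDiff μ f n k x =
      dyadicAvg μ f (dyadicInterval (n - 1) (dyadicIdx x (n - 1)))
        - dyadicAvg μ f (dyadicInterval n k) := by
  have hxj : x ∈ dyadicInterval (n - 1) (dyadicIdx x (n - 1)) := mem_dk x (n - 1)
  rcases dyadicIdx_child hx with hj | hj
  · have hmem1 : x ∈ dyadicInterval (n - 1) (2 * k) := hj ▸ hxj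
    have hnot2 : x ∉ dyadicInterval (n - 1) (2 * k + 1) := by
      intro h
      have := mem_dyadic_iff.1 h
      omega
    rw [haarDiff, Set.indicator_of_mem hmem1, Set.indicator_of_notMem hnot2,
      Set.indicator_of_mem hx, hj]
    ring
  · have hmem2 : x ∈ dyadicInterval (n - 1) (2 * k + 1) := hj ▸ hxj
    have hnot1 : x ∉ dyadicInterval (n - 1) (2 * k) := by
      intro h
      have := mem_dyadic_iff.1 h
      omega
    rw [haarDiff, Set.indicator_of_notMem hnot1, Set.indicator_of_mem hmem2,
      Set.indicator_of_mem hx, hj]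
    ring

lemma measure_dyadic_ne_top (μ : Measure ℝ) [IsLocallyFiniteMeasure μ] (n k : ℤ) :
    μ (dyadicInterval n k) ≠ ⊤ := by
  have h : μ (dyadicInterval n k) ≤ μ (Set.Icc ((k:ℝ) * 2 ^ n) (((k:ℝ) + 1) * 2 ^ n)) :=
    measure_mono Set.Ico_subset_Icc_self
  exact (h.trans_lt (isCompact_Icc.measure_lt_top)).ne

lemma tele_aux (g : ℤ → ℝ) (m : ℤ) :
    ∀ e : ℕ, ∑ n ∈ Finset.Icc m (m + (e:ℤ)), (g (n - 1) - g n) = g (m - 1) - g (m + (e:ℤ)) := by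
  intro e
  induction e with
  | zero => simp
  | succ e ih =>
    have hins : Finset.Icc m (m + ((e:ℤ) + 1)) = insert (m + (e:ℤ) + 1) (Finset.Icc m (m + (e:ℤ))) := by
      ext a
      simp only [Finset.mem_Icc, Finset.mem_insert]
      omega
    have hnot : m + (e:ℤ) + 1 ∉ Finset.Icc m (m + (e:ℤ)) := by
      simp only [Finset.mem_Icc]
      omega
    push_cast
    rw [hins, Finset.sum_insert hnot, ih]
    have h1 : m + (e:ℤ) + 1 - 1 = m + (e:ℤ) := by ring
    rw [h1]
    ring

lemma tele_sum (g : ℤ → ℝ) (m N : ℤ) (hN : m ≤ N) :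
    ∑ n ∈ Finset.Icc m N, (g (n - 1) - g n) = g (m - 1) - g N := by
  have he : N = m + ((N - m).toNat : ℤ) := by omega
  rw [he]
  exact tele_aux g m (N - m).toNat


lemma avg_le_maximal (μ : Measure ℝ) [IsLocallyFiniteMeasure μ] (f : ℝ → ℝ)
    (nS kS n k : ℤ) (x : ℝ) (hx : x ∈ dyadicInterval n k)
    (hsub : dyadicInterval n k ⊆ dyadicInterval nS kS) :
    ENNReal.ofReal |dyadicAvg μ f (dyadicInterval n k)|
      ≤ dyadicMaximal μ (fun y => ENNReal.ofReal |(dyadicInterval nS kS).indicator f y|) x := by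
  have hfin : μ (dyadicInterval n k) ≠ ⊤ := measure_dyadic_ne_top μ n k
  rcases eq_or_ne (μ (dyadicInterval n k)) 0 with h0 | h0
  · rw [dyadicAvg, h0]
    simp
  · have hpos : 0 < (μ (dyadicInterval n k)).toReal := ENNReal.toReal_pos h0 hfin
    have hcongr : (∫⁻ y in dyadicInterval n k,
          ENNReal.ofReal |(dyadicInterval nS kS).indicator f y| ∂μ)
        = ∫⁻ y in dyadicInterval n k, ENNReal.ofReal |f y| ∂μ := by
      apply setLIntegral_congr_fun measurableSet_Ico
      intro y hy
      dsimp only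
      rw [Set.indicator_of_mem (hsub hy)]
    have hM : (μ (dyadicInterval n k))⁻¹ *
          ∫⁻ y in dyadicInterval n k, ENNReal.ofReal |f y| ∂μ
        ≤ dyadicMaximal μ (fun y => ENNReal.ofReal |(dyadicInterval nS kS).indicator f y|) x := by
      rw [dyadicMaximal]
      refine le_iSup_of_le n (le_iSup_of_le k (le_iSup_of_le hx ?_))
      rw [hcongr]
    refine le_trans ?_ hM
    rw [dyadicAvg, abs_div, abs_of_nonneg ENNReal.toReal_nonneg,
      ENNReal.ofReal_div_of_pos hpos, ENNReal.ofReal_toReal hfin,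
      ENNReal.div_eq_inv_mul]
    refine mul_le_mul_right ?_ _
    have h1 : ENNReal.ofReal |∫ y in dyadicInterval n k, f y ∂μ|
        ≤ ∫⁻ y in dyadicInterval n k, ‖f y‖₊ ∂μ := by
      rw [← Real.enorm_eq_ofReal_abs]
      exact enorm_integral_le_lintegral_enorm _
    refine h1.trans (le_of_eq ?_)
    apply lintegral_congr
    intro a
    exact Real.enorm_eq_ofReal_abs _


/-- If `Λ` is a connected (in the tree order) collection of dyadic intervals strictly
contained in the dyadic interval `S`, then the Haar projection
`P_Λ f = ∑_{I ∈ Λ} Δ_I^μ f` satisfies `|P_Λ f(x)| ≤ 2 M_μ(1_S f)(x)` pointwise. -/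
theorem stmt9 (μ : Measure ℝ) [IsLocallyFiniteMeasure μ] (f : ℝ → ℝ)
    (nS kS : ℤ) (Λ : Set (ℤ × ℤ))
    (hΛsub : ∀ q ∈ Λ, dyadicInterval q.1 q.2 ⊆ dyadicInterval nS kS ∧
      dyadicInterval q.1 q.2 ≠ dyadicInterval nS kS)
    (hconn : ∀ q ∈ Λ, ∀ q' ∈ Λ, ∀ n k : ℤ,
      dyadicInterval q.1 q.2 ⊆ dyadicInterval n k →
      dyadicInterval n k ⊆ dyadicInterval q'.1 q'.2 → (n, k) ∈ Λ) :
    ∀ x : ℝ,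
      ENNReal.ofReal |∑' q : Λ, haarDiff μ f q.1.1 q.1.2 x|
        ≤ 2 * dyadicMaximal μ
            (fun y => ENNReal.ofReal |(dyadicInterval nS kS).indicator f y|) x := by
  classical
  intro x
  set M := dyadicMaximal μ
      (fun y => ENNReal.ofReal |(dyadicInterval nS kS).indicator f y|) x with hMdef
  set F : Λ → ℝ := fun q => haarDiff μ f q.1.1 q.1.2 x with hFdef
  by_cases hsum : Summable F
  swap
  · rw [tsum_eq_zero_of_not_summable hsum]
    simp
  rcases eq_or_ne M ⊤ with hM | hM
  · rw [hM]
    simp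
  set C := 2 * M.toReal with hCdef
  have hC0 : 0 ≤ C := by positivity
  -- average bound in real form
  have havg : ∀ n k : ℤ, x ∈ dyadicInterval n k →
      dyadicInterval n k ⊆ dyadicInterval nS kS →
      |dyadicAvg μ f (dyadicInterval n k)| ≤ M.toReal := by
    intro n k h1 h2
    have := avg_le_maximal μ f nS kS n k x h1 h2
    exact (ENNReal.ofReal_le_iff_le_toReal hM).1 this
  -- the frequent bound on partial sums
  have hfreq : ∀ s : Finset Λ, ∃ s' : Finset Λ, s ⊆ s' ∧ |∑ q ∈ s', F q| ≤ C := by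
    intro s
    set T := s.filter (fun q => F q ≠ 0) with hTdef
    by_cases hT : T.Nonempty
    swap
    · refine ⟨s, subset_rfl, ?_⟩
      have hz : ∑ q ∈ s, F q = 0 := by
        apply Finset.sum_eq_zero
        intro q hq
        by_contra h
        exact hT ⟨q, Finset.mem_filter.2 ⟨hq, h⟩⟩
      rw [hz, abs_zero]
      exact hC0
    · have hmemT : ∀ q ∈ T, x ∈ dyadicInterval q.1.1 q.1.2 := by
        intro q hq
        by_contra h
        exact (Finset.mem_filter.1 hq).2 (haar_not_mem h)
      have hidxT : ∀ q ∈ T, q.1.2 = dyadicIdx x q.1.1 :=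
        fun q hq => (mem_dyadic_iff.1 (hmemT q hq)).symm
      set Ts : Finset ℤ := T.image (fun q => q.1.1) with hTs
      have hTs_ne : Ts.Nonempty := hT.image _
      set m := Ts.min' hTs_ne with hm
      set N := Ts.max' hTs_ne with hN
      have hmN : m ≤ N := Finset.min'_le _ _ (Ts.max'_mem hTs_ne)
      obtain ⟨qm, hqmT, hqm⟩ := Finset.mem_image.1 (Ts.min'_mem hTs_ne)
      obtain ⟨qN, hqNT, hqN⟩ := Finset.mem_image.1 (Ts.max'_mem hTs_ne)
      have hxqm : x ∈ dyadicInterval qm.1.1 qm.1.2 := hmemT qm hqmT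
      have hxqN : x ∈ dyadicInterval qN.1.1 qN.1.2 := hmemT qN hqNT
      -- the whole block of scales is in Λ
      have hblock : ∀ n : ℤ, m ≤ n → n ≤ N → (n, dyadicIdx x n) ∈ Λ := by
        intro n h1 h2
        refine hconn qm.1 qm.2 qN.1 qN.2 n (dyadicIdx x n) ?_ ?_
        · exact dyadic_nested (by omega) hxqm (mem_dk x n)
        · exact dyadic_nested (by omega) (mem_dk x n) hxqN
      set B : Finset Λ := (Finset.Icc m N).attach.image
        (fun n => (⟨(n.1, dyadicIdx x n.1),
          hblock n.1 (Finset.mem_Icc.1 n.2).1 (Finset.mem_Icc.1 n.2).2⟩ : Λ)) with hB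
      refine ⟨s ∪ B, Finset.subset_union_left, ?_⟩
      have hsum_eq : ∑ q ∈ s ∪ B, F q = ∑ q ∈ B, F q := by
        refine (Finset.sum_subset Finset.subset_union_right ?_).symm
        intro q hq hqB
        by_contra hFq
        have hqT : q ∈ T := by
          rcases Finset.mem_union.1 hq with h | h
          · exact Finset.mem_filter.2 ⟨h, hFq⟩
          · exact absurd h hqB
        have hscale : q.1.1 ∈ Finset.Icc m N := by
          rw [Finset.mem_Icc]
          have hq1 : q.1.1 ∈ Ts := Finset.mem_image_of_mem (fun q : Λ => q.1.1) hqT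
          exact ⟨Ts.min'_le _ hq1, Ts.le_max' _ hq1⟩
        apply hqB
        rw [hB, Finset.mem_image]
        refine ⟨⟨q.1.1, hscale⟩, Finset.mem_attach _ _, ?_⟩
        apply Subtype.ext
        exact Prod.ext rfl (hidxT q hqT).symm
      have hinj : ∀ a ∈ (Finset.Icc m N).attach, ∀ b ∈ (Finset.Icc m N).attach,
          (⟨(a.1, dyadicIdx x a.1), hblock a.1 (Finset.mem_Icc.1 a.2).1 (Finset.mem_Icc.1 a.2).2⟩ : Λ)
            = ⟨(b.1, dyadicIdx x b.1), hblock b.1 (Finset.mem_Icc.1 b.2).1 (Finset.mem_Icc.1 b.2).2⟩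
          → a = b := by
        intro a _ b _ hab
        have : a.1 = b.1 := congrArg (fun q : Λ => q.1.1) hab
        exact Subtype.ext this
      have hBsum : ∑ q ∈ B, F q =
          dyadicAvg μ f (dyadicInterval (m - 1) (dyadicIdx x (m - 1)))
            - dyadicAvg μ f (dyadicInterval N (dyadicIdx x N)) := by
        rw [hB, Finset.sum_image hinj]
        have hterm : ∀ a : {z // z ∈ Finset.Icc m N},
            F ⟨(a.1, dyadicIdx x a.1),
                hblock a.1 (Finset.mem_Icc.1 a.2).1 (Finset.mem_Icc.1 a.2).2⟩
              = dyadicAvg μ f (dyadicInterval (a.1 - 1) (dyadicIdx x (a.1 - 1)))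
                - dyadicAvg μ f (dyadicInterval a.1 (dyadicIdx x a.1)) := by
          intro a
          exact haar_mem (mem_dk x a.1)
        rw [Finset.sum_congr rfl (fun a _ => hterm a)]
        rw [Finset.sum_attach (Finset.Icc m N)
          (fun n => dyadicAvg μ f (dyadicInterval (n - 1) (dyadicIdx x (n - 1)))
            - dyadicAvg μ f (dyadicInterval n (dyadicIdx x n)))]
        exact tele_sum (fun n => dyadicAvg μ f (dyadicInterval n (dyadicIdx x n))) m N hmN
      rw [hsum_eq, hBsum]
      have hmΛ : (m, dyadicIdx x m) ∈ Λ := hblock m le_rfl hmN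
      have hNΛ : (N, dyadicIdx x N) ∈ Λ := hblock N hmN le_rfl
      have hSm : dyadicInterval m (dyadicIdx x m) ⊆ dyadicInterval nS kS :=
        (hΛsub _ hmΛ).1
      have hSm' : dyadicInterval (m - 1) (dyadicIdx x (m - 1)) ⊆ dyadicInterval nS kS :=
        (dyadic_nested (by omega) (mem_dk x (m - 1)) (mem_dk x m)).trans hSm
      have hSN : dyadicInterval N (dyadicIdx x N) ⊆ dyadicInterval nS kS :=
        (hΛsub _ hNΛ).1
      have b1 := havg (m - 1) (dyadicIdx x (m - 1)) (mem_dk x (m - 1)) hSm'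
      have b2 := havg N (dyadicIdx x N) (mem_dk x N) hSN
      have habs : |dyadicAvg μ f (dyadicInterval (m - 1) (dyadicIdx x (m - 1)))
          - dyadicAvg μ f (dyadicInterval N (dyadicIdx x N))|
          ≤ |dyadicAvg μ f (dyadicInterval (m - 1) (dyadicIdx x (m - 1)))|
            + |dyadicAvg μ f (dyadicInterval N (dyadicIdx x N))| := abs_sub _ _
      rw [hCdef]
      linarith
  -- conclude via the limit of partial sums
  have habs : Filter.Tendsto (fun s : Finset Λ => |∑ q ∈ s, F q|)
      Filter.atTop (𝓝 |∑' q, F q|) :=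
    (continuous_abs.tendsto _).comp hsum.hasSum
  have hmem : |∑' q, F q| ∈ Set.Iic C := by
    refine IsClosed.mem_of_frequently_of_tendsto isClosed_Iic ?_ habs
    rw [Filter.frequently_atTop]
    intro s
    obtain ⟨s', h1, h2⟩ := hfreq s
    exact ⟨s', Finset.le_iff_subset.2 h1, h2⟩
  calc ENNReal.ofReal |∑' q, F q| ≤ ENNReal.ofReal C := ENNReal.ofReal_le_ofReal hmem
    _ = 2 * M := by
      rw [hCdef, ENNReal.ofReal_mul (by norm_num), ENNReal.ofReal_toReal hM]
      norm_num
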